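/- Let B ∈ ℤ^{n×n} and b ∈ ℤⁿ, and define the equivalence relation on ℤⁿ by x ~ y if and only if there exists z ∈ ℤⁿ with x − y = Bz or x + y + b = Bz. Then the number E(B,b) of equivalence classes satisfies E(B,b) = (|det(B)|_∞ + O(B,b))/2; in particular, if det(B) ≠ 0 there are exactly (|det(B)| + O(B,b))/2 classes, and if det(B) = 0 there are infinitely many classes. -/

import Mathlib

open Matrix

noncomputable section

/-- `|x|_∞` for an integer `x`: `|x|` if `x ≠ 0` and `∞` if `x = 0`. -/
def intAbsInfty (x : ℤ) : ℕ∞ := if x = 0 then ⊤ else (x.natAbs : ℕ∞)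

/-- `O(B,b)`: the number of solutions `x ∈ (ℤ/2ℤ)ⁿ` of the linear system `B̄ x = b̄`,
where bars denote reduction modulo `2`. -/
noncomputable def Ocount {n : ℕ} (B : Matrix (Fin n) (Fin n) ℤ) (b : Fin n → ℤ) : ℕ :=
  Nat.card {x : Fin n → ZMod 2 //
    (B.map (Int.cast : ℤ → ZMod 2)) *ᵥ x = fun i => ((b i : ZMod 2))}

/-- Counting orbits of an involution on a finite type. -/

lemma invol_count {α : Type*} [Finite α] (σ : α → α) (hσ : ∀ a, σ (σ a) = a) :
    2 * Nat.card (Quot (fun g h : α => h = g ∨ h = σ g)) =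
      Nat.card α + Nat.card {a : α // σ a = a} := by
  classical
  set r : α → α → Prop := fun g h => h = g ∨ h = σ g with hr
  have hequiv : Equivalence r := by
    constructor
    · intro a; exact Or.inl rfl
    · intro a c h
      rcases h with h | h
      · exact Or.inl h.symm
      · right; rw [h, hσ]
    · intro a c d h1 h2
      rcases h2 with rfl | rfl <;> rcases h1 with rfl | rfl
      · exact Or.inl rfl
      · exact Or.inr rfl
      · exact Or.inr rfl
      · exact Or.inl (hσ a)
  have key : ∀ x y : α, Quot.mk r x = Quot.mk r y ↔ r x y := by
    intro x y
    rw [Quot.eq]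
    exact hequiv.eqvGen_iff
  cases nonempty_fintype α
  haveI : Fintype (Quot r) := Fintype.ofSurjective (Quot.mk r) (Quot.exists_rep)
  haveI : Fintype {a : α // σ a = a} := Fintype.ofFinite _
  rw [Nat.card_eq_fintype_card, Nat.card_eq_fintype_card, Nat.card_eq_fintype_card]
  have hcard : (Finset.univ : Finset α).card =
      ∑ o ∈ (Finset.univ : Finset (Quot r)), ((Finset.univ : Finset α).filter
        (fun x => Quot.mk r x = o)).card :=
    Finset.card_eq_sum_card_fiberwise (fun x _ => Finset.mem_univ _)
  have hfix : ((Finset.univ : Finset α).filter (fun x => σ x = x)).card =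
      ∑ o ∈ (Finset.univ : Finset (Quot r)), ((Finset.univ.filter (fun x => σ x = x)).filter
        (fun x => Quot.mk r x = o)).card :=
    Finset.card_eq_sum_card_fiberwise (fun x _ => Finset.mem_univ _)
  have hfixcard : Fintype.card {a : α // σ a = a} =
      ((Finset.univ : Finset α).filter (fun x => σ x = x)).card :=
    Fintype.card_of_subtype _ (by simp)
  have hper : ∀ o : Quot r, ((Finset.univ : Finset α).filter (fun x => Quot.mk r x = o)).card +
      ((Finset.univ.filter (fun x => σ x = x)).filter (fun x => Quot.mk r x = o)).card = 2 := by
    intro o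
    obtain ⟨x, rfl⟩ := Quot.exists_rep o
    have hfib : (Finset.univ : Finset α).filter (fun y => Quot.mk r y = Quot.mk r x)
        = {x, σ x} := by
      ext y
      simp only [Finset.mem_filter, Finset.mem_univ, true_and, Finset.mem_insert,
        Finset.mem_singleton, key]
      constructor
      · rintro (h | h)
        · exact Or.inl h.symm
        · exact Or.inr (show σ x = y by rw [h, hσ]).symm
      · rintro (rfl | rfl)
        · exact Or.inl rfl
        · exact Or.inr (hσ x).symm
    by_cases hx : σ x = x
    · have h1 : ({x, σ x} : Finset α) = {x} := by rw [hx]; simp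
      have h2 : (Finset.univ.filter (fun y => σ y = y)).filter
          (fun y => Quot.mk r y = Quot.mk r x) = {x} := by
        ext y
        simp only [Finset.mem_filter, Finset.mem_univ, true_and, Finset.mem_singleton, key]
        constructor
        · rintro ⟨hy, h | h⟩
          · exact h.symm
          · exact (h.trans hy).symm
        · rintro rfl; exact ⟨hx, Or.inl rfl⟩
      rw [hfib, h1, h2]
      simp
    · have h2 : (Finset.univ.filter (fun y => σ y = y)).filter
          (fun y => Quot.mk r y = Quot.mk r x) = ∅ := by
        ext y
        simp only [Finset.mem_filter, Finset.mem_univ, true_and, Finset.notMem_empty,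
          iff_false, not_and, key]
        rintro hy (h | h)
        · rw [← h] at hy; exact hx hy
        · rw [hy] at h; rw [← h] at hy; exact hx hy
      rw [hfib, h2]
      have : ({x, σ x} : Finset α).card = 2 := by
        rw [Finset.card_insert_of_notMem (by simp [Ne.symm hx]), Finset.card_singleton]
      simp [this]
  calc 2 * Fintype.card (Quot r)
      = ∑ _o ∈ (Finset.univ : Finset (Quot r)), 2 := by
        rw [Finset.sum_const, Finset.card_univ, smul_eq_mul, mul_comm]
    _ = Fintype.card α + Fintype.card {a : α // σ a = a} := by
        rw [Fintype.card, hcard, hfixcard, hfix, ← Finset.sum_add_distrib]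
        exact (Finset.sum_congr rfl fun o _ => (hper o)).symm

/-- Cardinality of the cokernel of an injective integer matrix. -/

lemma card_coker {n : ℕ} (B : Matrix (Fin n) (Fin n) ℤ) (hB : B.det ≠ 0) :
    Nat.card ((Fin n → ℤ) ⧸ LinearMap.range B.mulVecLin) = B.det.natAbs := by
  classical
  set N : Submodule ℤ (Fin n → ℤ) := LinearMap.range B.mulVecLin with hN
  have hinj : Function.Injective B.mulVecLin := by
    intro x y hxy
    by_contra hne
    apply hB
    rw [← Matrix.exists_mulVec_eq_zero_iff]
    refine ⟨x - y, sub_ne_zero.mpr hne, ?_⟩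
    have : B.mulVecLin (x - y) = 0 := by rw [map_sub, hxy, sub_self]
    simpa [Matrix.mulVecLin_apply] using this
  obtain ⟨m, snf⟩ := N.smithNormalForm (Pi.basisFun ℤ (Fin n))
  have hmn : m = n := by
    have := card_eq_of_linearEquiv ℤ (snf.bN.equivFun.symm.trans (LinearEquiv.ofInjective B.mulVecLin hinj).symm)
    simpa using this
  subst hmn
  -- the bijection from `f`
  have hbij : Function.Bijective snf.f := Finite.injective_iff_bijective.mp snf.f.injective
  set σe : Fin m ≃ Fin m := Equiv.ofBijective snf.f hbij with hσe
  set e2 : (Fin m → ℤ) ≃ₗ[ℤ] N := snf.bM.equiv snf.bN σe.symm with he2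
  set g : (Fin m → ℤ) →ₗ[ℤ] (Fin m → ℤ) := N.subtype ∘ₗ (e2 : (Fin m → ℤ) →ₗ[ℤ] N) with hg
  have hgb : ∀ j, g (snf.bM j) = snf.a (σe.symm j) • snf.bM j := by
    intro j
    have h1 : e2 (snf.bM j) = snf.bN (σe.symm j) := snf.bM.equiv_apply _ _ _
    have h2 : snf.f (σe.symm j) = j := σe.apply_symm_apply j
    simp only [hg, LinearMap.comp_apply, LinearEquiv.coe_coe, h1, Submodule.coe_subtype]
    rw [snf.snf, h2]
  have hdetg : (LinearMap.det g).natAbs = ∏ i, (snf.a i).natAbs := by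
    have hmat : LinearMap.toMatrix snf.bM snf.bM g = Matrix.diagonal (fun j => snf.a (σe.symm j)) := by
      ext i j
      rw [LinearMap.toMatrix_apply, hgb, _root_.map_smul, Module.Basis.repr_self]
      by_cases h : i = j
      · subst h; simp
      · simp [Matrix.diagonal_apply_ne _ h, Finsupp.single_eq_of_ne h]
    rw [← LinearMap.det_toMatrix snf.bM, hmat, Matrix.det_diagonal]
    calc (∏ i, snf.a (σe.symm i)).natAbs
        = ∏ i, (snf.a (σe.symm i)).natAbs := map_prod Int.natAbsHom _ _
      _ = ∏ i, (snf.a i).natAbs := Equiv.prod_comp σe.symm (fun i => (snf.a i).natAbs)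
  have hcomp : B.mulVecLin = N.subtype ∘ₗ
      ((LinearEquiv.ofInjective B.mulVecLin hinj) : (Fin m → ℤ) →ₗ[ℤ] N) := by
    refine LinearMap.ext fun x => ?_
    exact (LinearEquiv.ofInjective_apply (h := hinj) _ _).symm
  have hdetB : B.det.natAbs = (LinearMap.det g).natAbs := by
    have h0 : B.det = LinearMap.det B.mulVecLin := by
      rw [← Matrix.toLin'_apply' B, LinearMap.det_toLin']
    rw [h0, hcomp]
    exact Int.natAbs_eq_iff_associated.mpr
      (LinearMap.associated_det_comp_equiv N.subtype (LinearEquiv.ofInjective B.mulVecLin hinj) e2)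
  have hindex : Nat.card ((Fin m → ℤ) ⧸ N) = N.toAddSubgroup.index := rfl
  rw [hindex, snf.toAddSubgroup_index_eq_pow_mul_prod]
  have hcard : Fintype.card (Fin m) - m = 0 := by simp
  rw [hcard, pow_zero, one_mul]
  have hspan : ∀ i : Fin m, (Ideal.span {snf.a i}).toAddSubgroup.index = (snf.a i).natAbs := by
    intro i
    rw [Ideal.span_singleton_toAddSubgroup_eq_zmultiples, Int.index_zmultiples]
  rw [Finset.prod_congr rfl (fun i _ => hspan i), hdetB, hdetg]

lemma cast_mulVec {n : ℕ} (M : Matrix (Fin n) (Fin n) ℤ) (w : Fin n → ℤ) (i : Fin n) :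
    (((M *ᵥ w) i : ℤ) : ZMod 2) =
      ((M.map (Int.cast : ℤ → ZMod 2)) *ᵥ (fun j => ((w j : ℤ) : ZMod 2))) i := by
  simp only [Matrix.mulVec, dotProduct, Matrix.map_apply]
  push_cast
  rfl

lemma fix_card {n : ℕ} (B : Matrix (Fin n) (Fin n) ℤ) (b : Fin n → ℤ)
    (hinj : Function.Injective B.mulVecLin) :
    Nat.card {g : (Fin n → ℤ) ⧸ LinearMap.range B.mulVecLin //
        g + g + Submodule.Quotient.mk b = 0} = Ocount B b := by
  classical
  set N : Submodule ℤ (Fin n → ℤ) := LinearMap.range B.mulVecLin with hN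
  have hcast : ∀ c : ZMod 2, (((c.val : ℤ)) : ZMod 2) = c := by
    intro c
    rw [Int.cast_natCast]
    exact ZMod.natCast_rightInverse c
  -- the integer lift of a mod-2 solution, and the associated fixed point
  set wf : (Fin n → ZMod 2) → (Fin n → ℤ) := fun z i => ((z i).val : ℤ) with hwf
  have hdvd : ∀ z : Fin n → ZMod 2,
      (B.map (Int.cast : ℤ → ZMod 2)) *ᵥ z = (fun i => ((b i : ZMod 2))) →
      ∀ i, (2 : ℤ) ∣ (B *ᵥ (wf z) - b) i := by
    intro z hz i
    have : (((B *ᵥ (wf z) - b) i : ℤ) : ZMod 2) = 0 := by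
      have h1 : (((B *ᵥ (wf z)) i : ℤ) : ZMod 2) = ((B.map (Int.cast : ℤ → ZMod 2)) *ᵥ z) i := by
        rw [cast_mulVec]
        congr 1
        funext j
        rw [hcast]
      simp only [Pi.sub_apply, Int.cast_sub, h1, hz]
      ring
    exact (ZMod.intCast_zmod_eq_zero_iff_dvd _ 2).mp this
  set xf : (Fin n → ZMod 2) → (Fin n → ℤ) := fun z i => ((B *ᵥ (wf z) - b) i) / 2 with hxf
  have hxkey : ∀ z : Fin n → ZMod 2,
      (B.map (Int.cast : ℤ → ZMod 2)) *ᵥ z = (fun i => ((b i : ZMod 2))) →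
      xf z + xf z + b = B.mulVecLin (wf z) := by
    intro z hz
    funext i
    have h1 : 2 * (xf z i) = (B *ᵥ (wf z) - b) i := Int.mul_ediv_cancel' (hdvd z hz i)
    have h2 : (B *ᵥ (wf z) - b) i = (B *ᵥ (wf z)) i - b i := rfl
    have : (B.mulVecLin (wf z)) i = (B *ᵥ (wf z)) i := rfl
    simp only [Pi.add_apply, this]
    omega
  set F : {x : Fin n → ZMod 2 //
      (B.map (Int.cast : ℤ → ZMod 2)) *ᵥ x = fun i => ((b i : ZMod 2))} →
      {g : (Fin n → ℤ) ⧸ N // g + g + Submodule.Quotient.mk b = 0} := fun p =>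
    ⟨Submodule.Quotient.mk (xf p.1), by
      rw [← Submodule.Quotient.mk_add, ← Submodule.Quotient.mk_add]
      rw [Submodule.Quotient.mk_eq_zero]
      rw [hxkey p.1 p.2]
      exact ⟨wf p.1, rfl⟩⟩ with hF
  have hbij : Function.Bijective F := by
    constructor
    · rintro ⟨z, hz⟩ ⟨z', hz'⟩ h
      have h0 : Submodule.Quotient.mk (p := N) (xf z) = Submodule.Quotient.mk (xf z') := by
        simpa [hF] using congrArg Subtype.val h
      obtain ⟨u, hu⟩ := (Submodule.Quotient.eq N).mp h0
      have hww : B.mulVecLin (wf z - wf z') = B.mulVecLin (u + u) := by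
        rw [map_sub, map_add, hu, ← hxkey z hz, ← hxkey z' hz']
        abel
      have hww2 : wf z - wf z' = u + u := hinj hww
      apply Subtype.ext
      funext i
      show z i = z' i
      have : wf z i - wf z' i = u i + u i := congrFun hww2 i
      have hzi : ((wf z i : ℤ) : ZMod 2) = z i := hcast (z i)
      have hzi' : ((wf z' i : ℤ) : ZMod 2) = z' i := hcast (z' i)
      have hcastdiff : ((wf z i : ℤ) : ZMod 2) = ((wf z' i : ℤ) : ZMod 2) := by
        have : (wf z i : ℤ) = wf z' i + (u i + u i) := by omega
        rw [this]
        push_cast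
        simp [CharTwo.add_self_eq_zero]
      rw [← hzi, ← hzi', hcastdiff]
    · rintro ⟨g, hg⟩
      obtain ⟨x, rfl⟩ := Submodule.Quotient.mk_surjective N g
      rw [← Submodule.Quotient.mk_add, ← Submodule.Quotient.mk_add,
        Submodule.Quotient.mk_eq_zero] at hg
      obtain ⟨u, hu⟩ := hg
      set z : Fin n → ZMod 2 := fun j => ((u j : ℤ) : ZMod 2) with hz
      have hzsol : (B.map (Int.cast : ℤ → ZMod 2)) *ᵥ z = (fun i => ((b i : ZMod 2))) := by
        funext i
        have h1 : ((B.map (Int.cast : ℤ → ZMod 2)) *ᵥ z) i = (((B *ᵥ u) i : ℤ) : ZMod 2) :=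
          (cast_mulVec B u i).symm
        have h2 : (B *ᵥ u) i = x i + x i + b i := by
          have : B.mulVecLin u = x + x + b := hu
          exact congrFun this i
        rw [h1, h2]
        push_cast
        simp [CharTwo.add_self_eq_zero]
      refine ⟨⟨z, hzsol⟩, ?_⟩
      apply Subtype.ext
      show Submodule.Quotient.mk (xf z) = Submodule.Quotient.mk x
      rw [Submodule.Quotient.eq]
      have hdvd2 : ∀ i, (2 : ℤ) ∣ wf z i - u i := by
        intro i
        have : ((wf z i - u i : ℤ) : ZMod 2) = 0 := by
          push_cast
          rw [hcast (z i)]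
          simp [hz]
        exact (ZMod.intCast_zmod_eq_zero_iff_dvd _ 2).mp this
      set v : Fin n → ℤ := fun i => (wf z i - u i) / 2 with hv
      have hwu : wf z = u + (v + v) := by
        funext i
        have hv2 : 2 * v i = wf z i - u i := Int.mul_ediv_cancel' (hdvd2 i)
        show wf z i = u i + (v i + v i)
        omega
      refine ⟨v, ?_⟩
      have e1 : xf z + xf z + b = B.mulVecLin (wf z) := hxkey z hzsol
      have e2 : B.mulVecLin (wf z) = B.mulVecLin u + (B.mulVecLin v + B.mulVecLin v) := by
        rw [hwu, map_add, map_add]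
      funext i
      have c1 : xf z i + xf z i + b i = (B.mulVecLin u) i + ((B.mulVecLin v) i + (B.mulVecLin v) i) := by
        have := congrFun (e1.trans e2) i
        simpa using this
      have c2 : (B.mulVecLin u) i = x i + x i + b i := congrFun hu i
      show (B.mulVecLin v) i = xf z i - x i
      omega
  exact (Nat.card_eq_of_bijective F hbij).symm

/-- For the equivalence relation on `ℤⁿ` given by `x ~ y ↔ ∃ z, x - y = Bz ∨ x + y + b = Bz`,
the number `E(B,b)` of equivalence classes satisfies `E(B,b) = (|det B|_∞ + O(B,b))/2`,
computed in `ℕ ∪ {∞}` (stated equivalently as `2 ⬝ E(B,b) = |det B|_∞ + O(B,b)`); in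
particular there are infinitely many classes when `det B = 0`. -/
theorem stmt13 {n : ℕ} (B : Matrix (Fin n) (Fin n) ℤ) (b : Fin n → ℤ) :
    2 * ENat.card (Quot (fun x y : Fin n → ℤ =>
        (∃ z : Fin n → ℤ, x - y = B *ᵥ z) ∨ (∃ z : Fin n → ℤ, x + y + b = B *ᵥ z))) =
      intAbsInfty B.det + (Ocount B b : ℕ∞) := by
  classical
  set r : (Fin n → ℤ) → (Fin n → ℤ) → Prop := fun x y =>
    (∃ z : Fin n → ℤ, x - y = B *ᵥ z) ∨ (∃ z : Fin n → ℤ, x + y + b = B *ᵥ z) with hr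
  by_cases hdet : B.det = 0
  · -- infinitely many classes
    obtain ⟨v, hv0, hvB⟩ := Matrix.exists_vecMul_eq_zero_iff.mpr hdet
    obtain ⟨i0, hi0⟩ := Function.ne_iff.mp hv0
    have hvi0 : v i0 ≠ 0 := hi0
    have hwd : ∀ x y : Fin n → ℤ, r x y →
        (2 * (v ⬝ᵥ x) + v ⬝ᵥ b).natAbs = (2 * (v ⬝ᵥ y) + v ⬝ᵥ b).natAbs := by
      intro x y hxy
      rcases hxy with ⟨z, hz⟩ | ⟨z, hz⟩
      · have h1 : v ⬝ᵥ (x - y) = 0 := by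
          rw [hz, Matrix.dotProduct_mulVec, hvB, zero_dotProduct]
        have h2 : v ⬝ᵥ x - v ⬝ᵥ y = 0 := by rw [← dotProduct_sub]; exact h1
        have : v ⬝ᵥ x = v ⬝ᵥ y := by omega
        rw [this]
      · have h1 : v ⬝ᵥ (x + y + b) = 0 := by
          rw [hz, Matrix.dotProduct_mulVec, hvB, zero_dotProduct]
        have h2 : v ⬝ᵥ x + v ⬝ᵥ y + v ⬝ᵥ b = 0 := by
          rw [← dotProduct_add, ← dotProduct_add]; exact h1
        have : 2 * (v ⬝ᵥ x) + v ⬝ᵥ b = -(2 * (v ⬝ᵥ y) + v ⬝ᵥ b) := by omega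
        rw [this, Int.natAbs_neg]
    set hfun : Quot r → ℕ := Quot.lift (fun x => (2 * (v ⬝ᵥ x) + v ⬝ᵥ b).natAbs) hwd with hh
    have hval : ∀ k : ℕ, hfun (Quot.mk r ((k : ℤ) • Pi.single i0 1)) =
        (2 * ((k : ℤ) * v i0) + v ⬝ᵥ b).natAbs := by
      intro k
      have hdot : v ⬝ᵥ ((k : ℤ) • Pi.single i0 1) = (k : ℤ) * v i0 := by
        rw [dotProduct_smul]
        rw [dotProduct_single]
        simp [smul_eq_mul, mul_comm]
      show (2 * (v ⬝ᵥ ((k : ℤ) • Pi.single i0 1)) + v ⬝ᵥ b).natAbs = _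
      rw [hdot]
    have hinf : Infinite (Quot r) := by
      rw [← Set.infinite_univ_iff]
      intro hfin
      have hrange : (Set.range (fun k : ℕ => hfun (Quot.mk r ((k : ℤ) • Pi.single i0 1)))).Finite := by
        have hQ : Finite (Quot r) := Set.finite_univ_iff.mp hfin
        exact (Set.finite_range hfun).subset
          (Set.range_comp_subset_range (fun k : ℕ => Quot.mk r ((k : ℤ) • Pi.single i0 1)) hfun)
      obtain ⟨M, hM⟩ := hrange.bddAbove
      -- contradiction: values are unbounded
      have habs : ∀ k : ℕ, 2 * k ≤ (2 * ((k : ℤ) * v i0) + v ⬝ᵥ b).natAbs + (v ⬝ᵥ b).natAbs := by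
        intro k
        have h1 : (1 : ℤ) ≤ |v i0| := Int.one_le_abs (by omega)
        have h2 : (2 * k : ℤ) ≤ |2 * ((k : ℤ) * v i0)| := by
          rw [abs_mul, abs_mul, abs_two, Int.abs_natCast]
          nlinarith [Int.natCast_nonneg k]
        have h3 := abs_sub_abs_le_abs_sub (2 * ((k : ℤ) * v i0)) (-(v ⬝ᵥ b))
        rw [abs_neg, sub_neg_eq_add] at h3
        have e1 : |2 * ((k : ℤ) * v i0) + v ⬝ᵥ b| = ((2 * ((k : ℤ) * v i0) + v ⬝ᵥ b).natAbs : ℤ) :=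
          Int.abs_eq_natAbs _
        have e2 : |v ⬝ᵥ b| = ((v ⬝ᵥ b).natAbs : ℤ) := Int.abs_eq_natAbs _
        omega
      have hub := hM (Set.mem_range_self (M + (v ⬝ᵥ b).natAbs + 1))
      rw [hval] at hub
      have hlb := habs (M + (v ⬝ᵥ b).natAbs + 1)
      omega
    rw [ENat.card_eq_top_of_infinite]
    rw [intAbsInfty, if_pos hdet]
    rw [top_add]
    exact ENat.mul_top (by norm_num)
  · -- finitely many classes
    have hinj : Function.Injective B.mulVecLin := by
      intro x y hxy
      by_contra hne
      apply hdet
      rw [← Matrix.exists_mulVec_eq_zero_iff]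
      refine ⟨x - y, sub_ne_zero.mpr hne, ?_⟩
      have : B.mulVecLin (x - y) = 0 := by rw [map_sub, hxy, sub_self]
      simpa [Matrix.mulVecLin_apply] using this
    set N : Submodule ℤ (Fin n → ℤ) := LinearMap.range B.mulVecLin with hN
    have hcard : Nat.card ((Fin n → ℤ) ⧸ N) = B.det.natAbs := card_coker B hdet
    haveI hfinG : Finite ((Fin n → ℤ) ⧸ N) := by
      have : Nat.card ((Fin n → ℤ) ⧸ N) ≠ 0 := by
        rw [hcard]; exact Int.natAbs_ne_zero.mpr hdet
      exact (Nat.card_ne_zero.mp this).2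
    -- the involution on the quotient
    set σ : ((Fin n → ℤ) ⧸ N) → ((Fin n → ℤ) ⧸ N) :=
      fun g => -g - Submodule.Quotient.mk b with hσdef
    have hσ : ∀ g, σ (σ g) = g := by
      intro g
      show -(-g - Submodule.Quotient.mk b) - Submodule.Quotient.mk b = g
      abel
    have hσmk : ∀ x : Fin n → ℤ,
        σ (Submodule.Quotient.mk x) = Submodule.Quotient.mk (-x - b) := by
      intro x
      show -(Submodule.Quotient.mk x) - Submodule.Quotient.mk b = _
      rw [← Submodule.Quotient.mk_neg, ← Submodule.Quotient.mk_sub]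
    set r' : ((Fin n → ℤ) ⧸ N) → ((Fin n → ℤ) ⧸ N) → Prop :=
      fun g h => h = g ∨ h = σ g with hr'
    -- the equivalence between the two quotients
    have h1 : ∀ x y : Fin n → ℤ, r x y →
        Quot.mk r' (Submodule.Quotient.mk x) = Quot.mk r' (Submodule.Quotient.mk y) := by
      intro x y hxy
      rcases hxy with ⟨z, hz⟩ | ⟨z, hz⟩
      · have : Submodule.Quotient.mk (p := N) x = Submodule.Quotient.mk y :=
          (Submodule.Quotient.eq N).mpr ⟨z, hz.symm⟩
        rw [this]
      · refine Quot.sound (Or.inr ?_)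
        rw [hσmk]
        rw [Submodule.Quotient.eq]
        refine ⟨z, ?_⟩
        show B *ᵥ z = y - (-x - b)
        rw [← hz]
        abel
    have h2 : ∀ x y : Fin n → ℤ, N.quotientRel x y → Quot.mk r x = Quot.mk r y := by
      intro x y hxy
      have hmem : x - y ∈ N := by
        have : Submodule.Quotient.mk (p := N) x = Submodule.Quotient.mk y := Quotient.sound hxy
        exact (Submodule.Quotient.eq N).mp this
      obtain ⟨z, hz⟩ := hmem
      exact Quot.sound (Or.inl ⟨z, hz.symm⟩)
    have h3 : ∀ u w : (Fin n → ℤ) ⧸ N, r' u w →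
        Quot.lift (fun x => Quot.mk r x) h2 u = Quot.lift (fun x => Quot.mk r x) h2 w := by
      intro u w huw
      rcases huw with rfl | rfl
      · rfl
      · obtain ⟨x, rfl⟩ := Submodule.Quotient.mk_surjective N u
        rw [hσmk]
        show Quot.mk r x = Quot.mk r (-x - b)
        refine Quot.sound (Or.inr ⟨0, ?_⟩)
        rw [Matrix.mulVec_zero]
        abel
    set e : Quot r ≃ Quot r' :=
      { toFun := Quot.lift (fun x => Quot.mk r' (Submodule.Quotient.mk x)) h1
        invFun := Quot.lift (Quot.lift (fun x => Quot.mk r x) h2) h3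
        left_inv := by
          intro q
          induction q using Quot.ind with
          | _ x => rfl
        right_inv := by
          intro q
          induction q using Quot.ind with
          | _ u =>
            obtain ⟨x, rfl⟩ := Submodule.Quotient.mk_surjective N u
            rfl } with he
    haveI : Finite (Quot r') := Finite.of_surjective (Quot.mk r') (fun q => Quot.exists_rep q)
    haveI : Finite (Quot r) := Finite.of_equiv _ e.symm
    haveI : Fintype (Quot r) := Fintype.ofFinite _
    have hcount := invol_count σ hσ
    rw [← hr'] at hcount
    have hfixiff : ∀ g : (Fin n → ℤ) ⧸ N,
        (σ g = g) ↔ (g + g + Submodule.Quotient.mk b = 0) := by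
      intro g
      constructor
      · intro h
        have h' : -g - Submodule.Quotient.mk b = g := h
        have h2' : (-g - Submodule.Quotient.mk b) + (g + Submodule.Quotient.mk b) =
            g + (g + Submodule.Quotient.mk b) := by rw [h']
        calc g + g + Submodule.Quotient.mk b = g + (g + Submodule.Quotient.mk b) := by abel
          _ = (-g - Submodule.Quotient.mk b) + (g + Submodule.Quotient.mk b) := h2'.symm
          _ = 0 := by abel
      · intro h
        show -g - Submodule.Quotient.mk b = g
        calc -g - Submodule.Quotient.mk b
            = -g - Submodule.Quotient.mk b + (g + g + Submodule.Quotient.mk b) := by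
              rw [h, add_zero]
          _ = g := by abel
    have hfixcard : Nat.card {g : (Fin n → ℤ) ⧸ N // σ g = g} = Ocount B b := by
      rw [Nat.card_congr (Equiv.subtypeEquiv (Equiv.refl _) (fun g => by
        simpa using hfixiff g))]
      exact fix_card B b hinj
    -- assemble
    have hQ : ENat.card (Quot r) = (Nat.card (Quot r) : ℕ∞) := by
      rw [ENat.card_eq_coe_fintype_card, Nat.card_eq_fintype_card]
    rw [hQ]
    have hQQ : Nat.card (Quot r) = Nat.card (Quot r') := Nat.card_congr e
    rw [intAbsInfty, if_neg hdet]
    rw [← hcard, ← hfixcard, hQQ]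
    rw [← Nat.cast_ofNat (n := 2), ← Nat.cast_mul, hcount, Nat.cast_add]
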